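/- Let 𝔬 be a compact discrete valuation ring with maximal ideal 𝔭 and finite residue field, let ℓ ≥ 1, 𝔬_ℓ = 𝔬/𝔭^ℓ, δ ∈ π𝔬_ℓ, and let J(𝔬_ℓ) ⊆ GL₃(𝔬_ℓ) be the centralizer of c = [[0,0,1],[0,δ,0],[δ²,0,0]]. The kernel of the homomorphism Δ : J(𝔬_ℓ) → 𝔬_ℓ^× × 𝔬_ℓ^×, Δ(g) = (a − δz, b(a + δz) − 2δxy), consists exactly of the matrices [[1+δz, x, z], [δy, (1+2δxy)(1+2δz)^{−1}, y], [δ²z, δx, 1+δz]] with x, y, z ∈ 𝔬_ℓ. -/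

import Mathlib

open Matrix

/-- The map `Δ` reading off `(a - δz, b(a + δz) - 2δxy)` from a matrix
`[[a,x,z],[δy,b,y],[δ²z,δx,a]]`. -/
def JDelta {R : Type*} [CommRing R] (δ : R) (X : Matrix (Fin 3) (Fin 3) R) : R × R :=
  (X 0 0 - δ * X 0 2, X 1 1 * (X 0 0 + δ * X 0 2) - 2 * δ * X 0 1 * X 1 2)

theorem kernel_of_Delta (O : Type*) [CommRing O] [IsDomain O] [IsDiscreteValuationRing O]
    [Finite (IsLocalRing.ResidueField O)] (h2 : IsUnit (2 : O)) (ℓ : ℕ) (hℓ : 1 ≤ ℓ)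
    (R : Type*) [CommRing R] (q : O →+* R) (hq : Function.Surjective q)
    (hker : RingHom.ker q = IsLocalRing.maximalIdeal O ^ ℓ)
    (δ : R) (hδ : ∃ d ∈ IsLocalRing.maximalIdeal O, δ = q d)
    (c : Matrix (Fin 3) (Fin 3) R) (hc : c = !![0, 0, 1; 0, δ, 0; δ ^ 2, 0, 0])
    (u : (Matrix (Fin 3) (Fin 3) R)ˣ)
    (hu : (u : Matrix (Fin 3) (Fin 3) R) * c = c * u) :
    JDelta δ (u : Matrix (Fin 3) (Fin 3) R) = 1 ↔
      ∃ x y z : R, IsUnit (1 + 2 * δ * z) ∧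
        (u : Matrix (Fin 3) (Fin 3) R) =
          !![1 + δ * z, x, z;
             δ * y, (1 + 2 * δ * x * y) * Ring.inverse (1 + 2 * δ * z), y;
             δ ^ 2 * z, δ * x, 1 + δ * z] := by
  have hnil : IsNilpotent δ := by
    obtain ⟨d, hd, rfl⟩ := hδ
    exact ⟨ℓ, by rw [← map_pow, ← RingHom.mem_ker, hker]; exact Ideal.pow_mem_pow hd ℓ⟩
  set U : Matrix (Fin 3) (Fin 3) R := (u : Matrix (Fin 3) (Fin 3) R) with hU
  subst hc
  have h : ∀ i j : Fin 3, (U * !![0, 0, 1; 0, δ, 0; δ ^ 2, 0, 0]) i j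
      = (!![0, 0, 1; 0, δ, 0; δ ^ 2, 0, 0] * U) i j :=
    fun i j => congrFun (congrFun hu i) j
  have h02 := h 0 2; have h12 := h 1 2; have h22 := h 2 2; have h01 := h 0 1
  simp [Matrix.mul_apply, Fin.sum_univ_three, Matrix.vecHead, Matrix.vecTail] at h02 h12 h22 h01
  have hnil2 : ∀ w : R, IsNilpotent (2 * δ * w) := by
    intro w
    obtain ⟨n, hn⟩ := hnil
    exact ⟨n, by rw [mul_pow, mul_pow, hn]; ring⟩
  constructor
  · intro hJ
    rw [JDelta, Prod.ext_iff] at hJ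
    obtain ⟨h1, h2'⟩ := hJ
    simp only [Prod.fst_one, Prod.snd_one] at h1 h2'
    have hunit : IsUnit (1 + 2 * δ * U 0 2) := (hnil2 (U 0 2)).isUnit_one_add
    refine ⟨U 0 1, U 1 2, U 0 2, hunit, ?_⟩
    have ha : U 0 0 = 1 + δ * U 0 2 := by linear_combination h1
    have hb : U 1 1 = (1 + 2 * δ * U 0 1 * U 1 2) * Ring.inverse (1 + 2 * δ * U 0 2) := by
      have hb1 : U 1 1 * (1 + 2 * δ * U 0 2) = 1 + 2 * δ * U 0 1 * U 1 2 := by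
        linear_combination h2' - U 1 1 * h1
      calc U 1 1 = U 1 1 * ((1 + 2 * δ * U 0 2) * Ring.inverse (1 + 2 * δ * U 0 2)) := by
            rw [Ring.mul_inverse_cancel _ hunit, mul_one]
        _ = (1 + 2 * δ * U 0 1 * U 1 2) * Ring.inverse (1 + 2 * δ * U 0 2) := by
            rw [← mul_assoc, hb1]
    ext i j
    fin_cases i <;> fin_cases j <;>
      simp [ha, hb, h12, h22, ← h01, ← h02] <;> ring
  · rintro ⟨x, y, z, hunit, hUeq⟩
    have hinv : (1 + 2 * δ * z) * Ring.inverse (1 + 2 * δ * z) = 1 :=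
      Ring.mul_inverse_cancel _ hunit
    rw [JDelta, hUeq]
    refine Prod.ext ?_ ?_ <;> simp [Matrix.vecHead, Matrix.vecTail]
    linear_combination (1 + 2 * δ * x * y) * hinv
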